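/- (Two-recipient lemma.) Let T=(V,E) be an unweighted tree rooted at u, and let x be an internal node with children y_1,…,y_d at which no candidate is placed. Let F⊆⋃_{i} T_{y_i} be a nonempty set of internal candidates, and let e be the best external candidate, i.e., the minimizer of κ_x(c)=(d(x,c),id(c)) over candidates c∉T_x. Let r_1 be the minimizer of κ_x over F, let y* be the unique child with r_1∈T_{y*}, and let r_2 be the minimizer of κ_x over F\T_{y*} (r_2=⊥ if this set is empty). Then for every child y of x, the best candidate outside T_y from the perspective of any voter in T_y is: either e or r_1 if y≠y*, and either e or r_2 if y=y* (only e if r_2=⊥). In particular, among the internal candidates, only r_1 and r_2 can receive round-1 votes from voters outside their own child subtree of x. -/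

import Mathlib

/-- The preference key of voter `x` for candidate `c`: lexicographic in
(distance, candidate id), smaller preferred. -/
def voterKey {V : Type*} (d : V → V → ℕ) (idv : V → ℕ) (x c : V) : Lex (ℕ × ℕ) :=
  toLex (d x c, idv c)

/-- The subtree `T_x` of a tree with distance function `d` rooted at `u`:
the set of vertices whose unique path from the root `u` passes through `x`. -/
def Subtree {V : Type*} (d : V → V → ℕ) (u x : V) : Set V :=
  {v | d u x + d x v = d u v}

/-- `y` is a child of `x` in the tree `G` rooted at `u`. -/
def IsChild {V : Type*} (G : SimpleGraph V) (u x y : V) : Prop :=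
  G.Adj x y ∧ G.dist u y = G.dist u x + 1


namespace TwoRecipientAux

variable {V : Type*} {G : SimpleGraph V}

open SimpleGraph Walk

/-- In a tree, every path has length equal to the distance between its endpoints. -/
lemma path_length_eq (hG : G.IsTree) {a b : V} {p : G.Walk a b} (hp : p.IsPath) :
    p.length = G.dist a b := by
  obtain ⟨w, hwp, hwl⟩ := hG.isConnected.exists_path_of_dist a b
  rw [← hwl]
  exact congrArg Walk.length ((hG.existsUnique_path a b).unique hp hwp)

lemma dist_add_of_mem_support (hG : G.IsTree) {a b w : V} {p : G.Walk a b}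
    (hp : p.IsPath) (hw : w ∈ p.support) :
    G.dist a w + G.dist w b = G.dist a b := by
  classical
  have h1 := path_length_eq hG (hp.takeUntil hw)
  have h2 := path_length_eq hG (hp.dropUntil hw)
  have h3 := congrArg Walk.length (p.take_spec hw)
  rw [Walk.length_append] at h3
  rw [← path_length_eq hG hp, ← h3, h1, h2]

lemma dist_adj (hG : G.IsTree) {a b : V} (h : G.Adj a b) : G.dist a b = 1 :=
  SimpleGraph.dist_eq_one_iff_adj.mpr h

/-- In a tree, each vertex is strictly closer to one endpoint of an edge. -/
lemma side_total (hG : G.IsTree) {x y : V} (hxy : G.Adj x y) (c : V) :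
    G.dist x c = G.dist y c + 1 ∨ G.dist y c = G.dist x c + 1 := by
  obtain ⟨p, hp, hpl⟩ := hG.isConnected.exists_path_of_dist y c
  by_cases hx : x ∈ p.support
  · right
    have h1 := dist_add_of_mem_support hG hp hx
    have h2 : G.dist y x = 1 := dist_adj hG hxy.symm
    omega
  · left
    have hcons : (Walk.cons hxy p).IsPath := hp.cons hx
    have h1 := path_length_eq hG hcons
    rw [Walk.length_cons, hpl] at h1
    omega

/-- The only edge crossing the cut determined by the edge `(x,y)` is `(x,y)` itself. -/
lemma cross_edge (hG : G.IsTree) {x y a a' : V} (hxy : G.Adj x y) (haa' : G.Adj a a')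
    (ha : G.dist x a = G.dist y a + 1) (ha' : G.dist y a' = G.dist x a' + 1) :
    a = y ∧ a' = x := by
  have hconn := hG.isConnected
  have hd1 : G.dist a a' = 1 := dist_adj hG haa'
  have ht1 : G.dist x a ≤ G.dist x a' + G.dist a' a := hconn.dist_triangle
  have ht2 : G.dist y a' ≤ G.dist y a + G.dist a a' := hconn.dist_triangle
  have hc1 : G.dist a' a = G.dist a a' := SimpleGraph.dist_comm ..
  -- so dist x a' = dist y a, dist y a' = dist y a + 1
  have hxa' : G.dist x a' = G.dist y a := by omega
  by_cases ht : G.dist y a = 0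
  · constructor
    · exact (hconn.dist_eq_zero_iff.mp ht).symm
    · have : G.dist x a' = 0 := by omega
      exact (hconn.dist_eq_zero_iff.mp this).symm
  · exfalso
    obtain ⟨p, hp, hpl⟩ := hconn.exists_path_of_dist a y
    have hxs : x ∉ p.support := by
      intro hx
      have h1 := dist_add_of_mem_support hG hp hx
      have h2 : G.dist a x = G.dist x a := SimpleGraph.dist_comm ..
      have h3 : G.dist x y = 1 := dist_adj hG hxy
      have h4 : G.dist x y ≤ G.dist x a + G.dist a y := hconn.dist_triangle
      have h5 : G.dist a y = G.dist y a := SimpleGraph.dist_comm ..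
      omega
    have has : a' ∉ p.support := by
      intro hx
      have h1 := dist_add_of_mem_support hG hp hx
      have h2 : G.dist a' y = G.dist y a' := SimpleGraph.dist_comm ..
      have h5 : G.dist a y = G.dist y a := SimpleGraph.dist_comm ..
      omega
    -- build a path a' → a → ⋯ → y → x of length dist y a + 2
    have hq : (Walk.cons haa'.symm (p.append (Walk.cons hxy.symm Walk.nil))).IsPath := by
      have happ : (p.append (Walk.cons hxy.symm Walk.nil)).IsPath := by
        rw [Walk.isPath_def, Walk.support_append]
        simp only [Walk.support_cons, Walk.support_nil, List.tail_cons]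
        refine List.Nodup.append hp.support_nodup (List.nodup_singleton x) ?_
        simpa [List.disjoint_singleton] using hxs
      refine happ.cons ?_
      rw [Walk.mem_support_append_iff]
      push_neg
      constructor
      · exact has
      · intro h
        simp only [Walk.support_cons, Walk.support_nil, List.mem_cons,
          List.mem_singleton, List.not_mem_nil, or_false] at h
        rcases h with h | h
        · rw [h] at ha'
          have h0 : G.dist y y = 0 := SimpleGraph.dist_self
          omega
        · rw [h] at hxa'
          have h0 : G.dist x x = 0 := SimpleGraph.dist_self
          omega
    have hlen := path_length_eq hG hq
    rw [Walk.length_cons, Walk.length_append, Walk.length_cons, Walk.length_nil, hpl] at hlen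
    have h5 : G.dist a y = G.dist y a := SimpleGraph.dist_comm ..
    have h6 : G.dist a' x = G.dist x a' := SimpleGraph.dist_comm ..
    omega

lemma dist_cross_aux (hG : G.IsTree) {x y : V} (hxy : G.Adj x y) :
    ∀ n (a b : V), G.dist a b ≤ n → G.dist x a = G.dist y a + 1 →
      G.dist y b = G.dist x b + 1 →
      G.dist a b = G.dist a y + 1 + G.dist x b := by
  have hconn := hG.isConnected
  intro n
  induction n with
  | zero =>
    intro a b h ha hb
    have h0 : G.dist a b = 0 := Nat.le_zero.mp h
    have : a = b := hconn.dist_eq_zero_iff.mp h0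
    subst this
    omega
  | succ n ih =>
    intro a b h ha hb
    by_cases hle : G.dist a b ≤ n
    · exact ih a b hle ha hb
    have hne : a ≠ b := by
      intro hab; subst hab; omega
    obtain ⟨w, hwl⟩ := hconn.exists_walk_length_eq_dist a b
    cases w with
    | nil => exact absurd rfl hne
    | @cons _ c _ hac q =>
      rw [Walk.length_cons] at hwl
      have hdq : G.dist c b ≤ q.length := SimpleGraph.dist_le q
      have hd1 : G.dist a c = 1 := dist_adj hG hac
      have ht : G.dist a b ≤ G.dist a c + G.dist c b := hconn.dist_triangle
      have hcb : G.dist c b ≤ n := by omega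
      rcases side_total hG hxy c with hc | hc
      · -- c on the y-side
        have he := ih c b hcb hc hb
        have ht2 : G.dist a y ≤ G.dist a c + G.dist c y := hconn.dist_triangle
        have ht3 : G.dist a b ≤ G.dist a y + G.dist y b := hconn.dist_triangle
        omega
      · -- c on the x-side: the edge (a,c) crosses the cut, so a = y, c = x
        obtain ⟨hay, hcx⟩ := cross_edge hG hxy hac ha hc
        rw [hay]
        have h0 : G.dist y y = 0 := SimpleGraph.dist_self
        have hb' : G.dist y b = G.dist x b + 1 := hb
        omega

lemma dist_cross (hG : G.IsTree) {x y : V} (hxy : G.Adj x y) {a b : V}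
    (ha : G.dist x a = G.dist y a + 1) (hb : G.dist y b = G.dist x b + 1) :
    G.dist a b = G.dist a y + 1 + G.dist x b :=
  dist_cross_aux hG hxy (G.dist a b) a b le_rfl ha hb

lemma subtree_iff (hG : G.IsTree) {u x y : V} (hch : IsChild G u x y) (c : V) :
    c ∈ Subtree G.dist u y ↔ G.dist x c = G.dist y c + 1 := by
  obtain ⟨hadj, hdy⟩ := hch
  have hconn := hG.isConnected
  constructor
  · intro hc
    have hc' : G.dist u y + G.dist y c = G.dist u c := hc
    have ht : G.dist u c ≤ G.dist u x + G.dist x c := hconn.dist_triangle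
    rcases side_total hG hadj c with h | h
    · exact h
    · omega
  · intro h
    have hu : G.dist y u = G.dist x u + 1 := by
      have h1 : G.dist y u = G.dist u y := SimpleGraph.dist_comm ..
      have h2 : G.dist x u = G.dist u x := SimpleGraph.dist_comm ..
      omega
    have hcr := dist_cross hG hadj h hu
    show G.dist u y + G.dist y c = G.dist u c
    have h1 : G.dist c u = G.dist u c := SimpleGraph.dist_comm ..
    have h2 : G.dist c y = G.dist y c := SimpleGraph.dist_comm ..
    have h3 : G.dist x u = G.dist u x := SimpleGraph.dist_comm ..
    omega

lemma not_subtree_side (hG : G.IsTree) {u x y : V} (hch : IsChild G u x y) (c : V)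
    (hc : c ∉ Subtree G.dist u y) : G.dist y c = G.dist x c + 1 := by
  rcases side_total hG hch.1 c with h | h
  · exact absurd ((subtree_iff hG hch c).2 h) hc
  · exact h

lemma dist_decomp (hG : G.IsTree) {u x y v c : V} (hch : IsChild G u x y)
    (hv : v ∈ Subtree G.dist u y) (hc : c ∉ Subtree G.dist u y) :
    G.dist v c = G.dist v x + G.dist x c := by
  have hvs := (subtree_iff hG hch v).1 hv
  have hcs := not_subtree_side hG hch c hc
  have h1 := dist_cross hG hch.1 hvs hcs
  have h0 : G.dist x x = 0 := SimpleGraph.dist_self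
  have hx : G.dist y x = G.dist x x + 1 := by
    have := dist_adj hG hch.1.symm
    omega
  have h2 := dist_cross hG hch.1 hvs hx
  omega

lemma subtree_mono (hG : G.IsTree) {u x y : V} (hch : IsChild G u x y) :
    Subtree G.dist u y ⊆ Subtree G.dist u x := by
  intro c hc
  have hc' : G.dist u y + G.dist y c = G.dist u c := hc
  have hs := (subtree_iff hG hch c).1 hc
  show G.dist u x + G.dist x c = G.dist u c
  have := hch.2
  omega

lemma subtree_disjoint (hG : G.IsTree) {u x y y' c : V} (hch : IsChild G u x y)
    (hch' : IsChild G u x y') (hne : y ≠ y')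
    (hc : c ∈ Subtree G.dist u y) (hc' : c ∈ Subtree G.dist u y') : False := by
  have h1 := (subtree_iff hG hch c).1 hc
  have h2 := (subtree_iff hG hch' c).1 hc'
  have hxy' : G.dist x y' = 1 := dist_adj hG hch'.1
  have hy' : G.dist y y' = G.dist x y' + 1 := by
    rcases side_total hG hch.1 y' with h | h
    · have h0 : G.dist y y' = 0 := by omega
      exact absurd (hG.isConnected.dist_eq_zero_iff.mp h0) hne
    · exact h
  have hcr := dist_cross hG hch.1 h1 hy'
  have hc1 : G.dist c y' = G.dist y' c := SimpleGraph.dist_comm ..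
  have hc2 : G.dist c y = G.dist y c := SimpleGraph.dist_comm ..
  omega

lemma key_shift {W : Type*} (idv : W → ℕ) (k : ℕ) {c c' : W} {dc dc' : ℕ} :
    toLex (k + dc, idv c) ≤ toLex (k + dc', idv c') ↔
      toLex (dc, idv c) ≤ toLex (dc', idv c') := by
  simp only [Prod.Lex.le_iff, ofLex_toLex]
  constructor
  · rintro (h | ⟨h1, h2⟩)
    · left; omega
    · exact Or.inr ⟨by omega, h2⟩
  · rintro (h | ⟨h1, h2⟩)
    · left; omega
    · exact Or.inr ⟨by omega, h2⟩

lemma key_transfer (hG : G.IsTree) (idv : V → ℕ) {u x y v : V} (hch : IsChild G u x y)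
    (hv : v ∈ Subtree G.dist u y) {c c' : V} (hc : c ∉ Subtree G.dist u y)
    (hc' : c' ∉ Subtree G.dist u y) :
    voterKey G.dist idv v c ≤ voterKey G.dist idv v c' ↔
      voterKey G.dist idv x c ≤ voterKey G.dist idv x c' := by
  unfold voterKey
  rw [dist_decomp hG hch hv hc, dist_decomp hG hch hv hc']
  exact key_shift idv (G.dist v x)

lemma key_inj {idv : V → ℕ} (hid : Function.Injective idv) {x c c' : V}
    (h1 : voterKey G.dist idv x c ≤ voterKey G.dist idv x c')
    (h2 : voterKey G.dist idv x c' ≤ voterKey G.dist idv x c) : c = c' := by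
  have h := le_antisymm h1 h2
  unfold voterKey at h
  have h' := toLex.injective h
  exact hid (congrArg Prod.snd h')

end TwoRecipientAux

open TwoRecipientAux

/-- **Two-recipient lemma.**  Root the tree at `u`, let `x` be a node hosting no
candidate, let `F` be a nonempty set of internal candidates lying in child subtrees of
`x`, let `e` be the best external candidate (minimizing `κ_x` over candidates outside
`T_x`), let `r₁` minimize `κ_x` over `F`, let `y*` be the child of `x` whose subtree
contains `r₁`.  Then for every child `y` of `x` and every voter `v ∈ T_y`, any best
candidate outside `T_y` (from `v`'s perspective, among all candidates) is: `e` or `r₁`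
if `y ≠ y*`; and `e` or a minimizer `r₂` of `κ_x` over `F \ T_{y*}` if `y = y*`
(hence only `e` when `F \ T_{y*}` is empty). -/
theorem two_recipient_lemma {V : Type*}
    (G : SimpleGraph V) (hG : G.IsTree)
    (idv : V → ℕ) (hid : Function.Injective idv)
    (u x : V)
    (F : Set V) (hFne : F.Nonempty)
    (hF : ∀ c ∈ F, ∃ y, IsChild G u x y ∧ c ∈ Subtree G.dist u y)
    (Eext : Set V) (hEext : ∀ c ∈ Eext, c ∉ Subtree G.dist u x)
    (e : V) (he : e ∈ Eext)
    (hebest : ∀ c ∈ Eext, voterKey G.dist idv x e ≤ voterKey G.dist idv x c)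
    (r₁ : V) (hr₁ : r₁ ∈ F)
    (hr₁best : ∀ c ∈ F, voterKey G.dist idv x r₁ ≤ voterKey G.dist idv x c)
    (ystar : V) (hystar : IsChild G u x ystar) (hr₁mem : r₁ ∈ Subtree G.dist u ystar) :
    ∀ y, IsChild G u x y → ∀ v ∈ Subtree G.dist u y,
      ∀ c ∈ F ∪ Eext, c ∉ Subtree G.dist u y →
        (∀ c' ∈ F ∪ Eext, c' ∉ Subtree G.dist u y →
          voterKey G.dist idv v c ≤ voterKey G.dist idv v c') →
        ((y ≠ ystar → c = e ∨ c = r₁) ∧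
         (y = ystar → c = e ∨
            (c ∈ F ∧ c ∉ Subtree G.dist u ystar ∧
              ∀ c' ∈ F, c' ∉ Subtree G.dist u ystar →
                voterKey G.dist idv x c ≤ voterKey G.dist idv x c'))) := by
  intro y hy v hv c hcmem hcny hcbest
  have heny : e ∉ Subtree G.dist u y := fun h => hEext e he (subtree_mono hG hy h)
  have hCe : c ∈ Eext → c = e := by
    intro hcE
    have h1 : voterKey G.dist idv x e ≤ voterKey G.dist idv x c := hebest c hcE
    have h2 : voterKey G.dist idv v c ≤ voterKey G.dist idv v e :=
      hcbest e (Or.inr he) heny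
    have h2' := (key_transfer hG idv hy hv hcny heny).1 h2
    exact key_inj hid h2' h1
  constructor
  · intro hyne
    rcases hcmem with hcF | hcE
    · right
      have hr₁ny : r₁ ∉ Subtree G.dist u y := fun h =>
        subtree_disjoint hG hy hystar hyne h hr₁mem
      have h1 : voterKey G.dist idv x r₁ ≤ voterKey G.dist idv x c := hr₁best c hcF
      have h2 := hcbest r₁ (Or.inl hr₁) hr₁ny
      have h2' := (key_transfer hG idv hy hv hcny hr₁ny).1 h2
      exact key_inj hid h2' h1
    · exact Or.inl (hCe hcE)
  · intro hyeq
    subst hyeq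
    rcases hcmem with hcF | hcE
    · right
      refine ⟨hcF, hcny, ?_⟩
      intro c' hc'F hc'ny
      have h2 := hcbest c' (Or.inl hc'F) hc'ny
      exact (key_transfer hG idv hy hv hcny hc'ny).1 h2
    · exact Or.inl (hCe hcE)
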